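/- Let A = ℤ[√2] be the ring of integers of ℚ(√2). If x, y, z ∈ A satisfy x⁴ + y⁴ = z⁴ then xyz = 0. -/

import Mathlib

open Zsqrtd
namespace FLT4

lemma two_nonsquare : ∀ n : ℤ, (2:ℤ) ≠ n * n := by
  intro n h
  rcases le_or_gt n 1 with h1 | h1
  · rcases le_or_gt (-1) n with h2 | h2 <;> nlinarith
  · nlinarith


instance : NoZeroDivisors (ℤ√2) where
  eq_zero_or_eq_zero_of_mul_eq_zero {a b} h := by
    have h0 : a.norm * b.norm = 0 := by
      rw [← Zsqrtd.norm_mul, h]; simp [Zsqrtd.norm_def]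
    rcases mul_eq_zero.mp h0 with h' | h'
    · exact Or.inl ((Zsqrtd.norm_eq_zero two_nonsquare a).1 h')
    · exact Or.inr ((Zsqrtd.norm_eq_zero two_nonsquare b).1 h')

instance : IsDomain (ℤ√2) := NoZeroDivisors.to_isDomain _


lemma norm_eq_zero' (a : ℤ√2) : a.norm = 0 ↔ a = 0 :=
  Zsqrtd.norm_eq_zero two_nonsquare a

noncomputable instance : EuclideanDomain (ℤ√2) where
  quotient a b := if b = 0 then 0 else
    ⟨round (((a * star b).re : ℚ) / (b.norm : ℚ)), round (((a * star b).im : ℚ) / (b.norm : ℚ))⟩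
  quotient_zero a := by simp
  remainder a b := a - b * (if b = 0 then 0 else
    ⟨round (((a * star b).re : ℚ) / (b.norm : ℚ)), round (((a * star b).im : ℚ) / (b.norm : ℚ))⟩)
  quotient_mul_add_remainder_eq a b := by ring
  r a b := a.norm.natAbs < b.norm.natAbs
  r_wellFounded := (measure (fun x : ℤ√2 => x.norm.natAbs)).wf
  remainder_lt a b hb := by
    simp only [if_neg hb]
    set q : ℤ√2 := ⟨round (((a * star b).re : ℚ) / (b.norm : ℚ)), round (((a * star b).im : ℚ) / (b.norm : ℚ))⟩ with hq
    have hnb : b.norm ≠ 0 := fun h => hb ((norm_eq_zero' b).1 h)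
    -- key : |norm (a - b*q)| * |norm b| = |norm ((a - b*q) * star b)| and estimate
    have hbst : b * star b = (b.norm : ℤ√2) := by
      rw [Zsqrtd.norm_def]; ext <;> simp [Zsqrtd.re_mul, Zsqrtd.im_mul] <;> ring
    have key : (a - b * q) * star b = a * star b - (b.norm : ℤ√2) * q := by
      rw [← hbst]; ring
    set x := a * star b with hx
    have hre : |(x.re : ℚ) - (b.norm : ℚ) * (q.re : ℚ)| ≤ |(b.norm : ℚ)| / 2 := by
      have h1 : |((x.re : ℚ) / (b.norm : ℚ)) - (q.re : ℚ)| ≤ 1/2 := abs_sub_round _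
      have hbq : ((b.norm : ℚ)) ≠ 0 := Int.cast_ne_zero.mpr hnb
      have h2 : |(x.re : ℚ) - (b.norm : ℚ) * (q.re : ℚ)| = |(b.norm : ℚ)| * |((x.re : ℚ) / (b.norm : ℚ)) - (q.re : ℚ)| := by
        rw [← abs_mul]
        congr 1
        field_simp
      rw [h2]
      have := mul_le_mul_of_nonneg_left h1 (abs_nonneg ((b.norm : ℚ)))
      linarith
    have him : |(x.im : ℚ) - (b.norm : ℚ) * (q.im : ℚ)| ≤ |(b.norm : ℚ)| / 2 := by
      have h1 : |((x.im : ℚ) / (b.norm : ℚ)) - (q.im : ℚ)| ≤ 1/2 := abs_sub_round _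
      have hbq : ((b.norm : ℚ)) ≠ 0 := Int.cast_ne_zero.mpr hnb
      have h2 : |(x.im : ℚ) - (b.norm : ℚ) * (q.im : ℚ)| = |(b.norm : ℚ)| * |((x.im : ℚ) / (b.norm : ℚ)) - (q.im : ℚ)| := by
        rw [← abs_mul]
        congr 1
        field_simp
      rw [h2]
      have := mul_le_mul_of_nonneg_left h1 (abs_nonneg ((b.norm : ℚ)))
      linarith
    -- now bound the norm of (a - b*q)
    set E : ℤ√2 := x - (b.norm : ℤ√2) * q with hE
    have hEre : (E.re : ℚ) = (x.re : ℚ) - (b.norm : ℚ) * (q.re : ℚ) := by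
      simp [hE, Zsqrtd.re_mul, Zsqrtd.im_mul]
    have hEim : (E.im : ℚ) = (x.im : ℚ) - (b.norm : ℚ) * (q.im : ℚ) := by
      simp [hE, Zsqrtd.re_mul, Zsqrtd.im_mul]
    have hnormE : |(E.norm : ℚ)| ≤ ((b.norm : ℚ))^2 / 2 := by
      rw [Zsqrtd.norm_def]
      push_cast
      rw [← hEre] at hre
      rw [← hEim] at him
      rw [abs_le] at hre him ⊢
      obtain ⟨h1, h2⟩ := hre; obtain ⟨h3, h4⟩ := him
      have k1 : (E.re:ℚ) * E.re ≤ ((b.norm : ℚ))^2/4 := by nlinarith [sq_abs ((b.norm:ℚ))]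
      have k2 : (E.im:ℚ) * E.im ≤ ((b.norm : ℚ))^2/4 := by nlinarith [sq_abs ((b.norm:ℚ))]
      constructor <;> nlinarith [mul_self_nonneg (E.re:ℚ), mul_self_nonneg (E.im:ℚ)]
    -- norm (a - b q) * norm (star b) = norm E
    have hmul : (a - b * q).norm * b.norm = E.norm := by
      have := Zsqrtd.norm_mul (a - b * q) (star b)
      rw [key] at this
      rw [this, Zsqrtd.norm_conj]
    have hlt : |(a - b*q).norm| < |b.norm| := by
      have h2 : |(a - b*q).norm| * |b.norm| = |E.norm| := by
        rw [← abs_mul, hmul]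
      have hb2 : (0:ℚ) < |(b.norm:ℚ)| := by
        rw [abs_pos]; exact_mod_cast hnb
      have : |((a - b*q).norm : ℚ)| * |(b.norm:ℚ)| ≤ ((b.norm : ℚ))^2/2 := by
        rw [← abs_mul]; push_cast [← hmul] at hnormE ⊢; exact hnormE
      have hq2 : |((a - b*q).norm : ℚ)| < |(b.norm:ℚ)| := by
        nlinarith [sq_abs ((b.norm:ℚ))]
      exact_mod_cast hq2
    have := Int.natAbs_lt_natAbs_of_nonneg_of_lt (abs_nonneg _) hlt
    simpa [Int.natAbs_abs] using this
  mul_left_not_lt a b hb := by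
    have hnb : b.norm ≠ 0 := fun h => hb ((norm_eq_zero' b).1 h)
    have : (a*b).norm.natAbs = a.norm.natAbs * b.norm.natAbs := by
      rw [Zsqrtd.norm_mul, Int.natAbs_mul]
    simp only [this, not_lt]
    have : 1 ≤ b.norm.natAbs := Nat.one_le_iff_ne_zero.mpr (fun h => hnb (Int.natAbs_eq_zero.mp h))
    calc a.norm.natAbs = a.norm.natAbs * 1 := by ring
      _ ≤ a.norm.natAbs * b.norm.natAbs := Nat.mul_le_mul_left _ this



noncomputable instance : GCDMonoid (ℤ√2) := by exact EuclideanDomain.gcdMonoid (ℤ√2)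

def lam : ℤ√2 := sqrtd

@[simp] lemma lam_re : lam.re = 0 := rfl
@[simp] lemma lam_im : lam.im = 1 := rfl

lemma lam_sq : lam ^ 2 = 2 := by ext <;> simp [lam, pow_two, Zsqrtd.re_mul, Zsqrtd.im_mul]

lemma lam_dvd_iff (x : ℤ√2) : lam ∣ x ↔ 2 ∣ x.re := by
  constructor
  · rintro ⟨c, rfl⟩
    simp [lam, Zsqrtd.re_mul]
  · intro ⟨m, hm⟩
    exact ⟨⟨x.im, m⟩, by ext <;> simp [lam, Zsqrtd.re_mul, Zsqrtd.im_mul, hm]⟩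

/-- "odd" elements -/
def Od (x : ℤ√2) : Prop := ¬ lam ∣ x

lemma od_iff (x : ℤ√2) : Od x ↔ ¬ (2 ∣ x.re) := by rw [Od, lam_dvd_iff]

lemma lam_ne_zero : lam ≠ 0 := by
  intro h
  have := congrArg Zsqrtd.im h
  simp at this

lemma lam_norm : lam.norm = -2 := by simp [Zsqrtd.norm_def]

lemma prime_lam : Prime lam := by
  refine ⟨lam_ne_zero, ?_, ?_⟩
  · intro h
    have := (Zsqrtd.isUnit_iff_norm_isUnit lam).mp h
    rw [lam_norm, Int.isUnit_iff] at this
    omega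
  · intro a b hab
    rw [lam_dvd_iff] at hab ⊢
    rw [lam_dvd_iff (x := b)]
    simp only [Zsqrtd.re_mul] at hab
    have h2 : (2:ℤ) ∣ a.re * b.re := by
      obtain ⟨t, ht⟩ := hab
      exact ⟨t - a.im * b.im, by linarith⟩
    exact (Int.prime_two.dvd_mul).mp h2

lemma od_ne_zero {x : ℤ√2} (h : Od x) : x ≠ 0 := by
  rintro rfl; exact h (dvd_zero _)

lemma od_mul {x y : ℤ√2} (hx : Od x) (hy : Od y) : Od (x * y) := by
  intro h
  rcases prime_lam.2.2 _ _ h with h | h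
  exacts [hx h, hy h]

lemma od_unit {x : ℤ√2} (h : IsUnit x) : Od x := fun hd =>
  prime_lam.2.1 (isUnit_of_dvd_unit hd h)

lemma od_pow {x : ℤ√2} (h : Od x) (n : ℕ) : Od (x ^ n) := by
  induction n with
  | zero => simpa using od_unit isUnit_one
  | succ n ih => rw [pow_succ]; exact od_mul ih h

lemma extract_aux : ∀ (N : ℕ) (x : ℤ√2), x ≠ 0 → x.norm.natAbs ≤ N →
    ∃ (k : ℕ) (u : ℤ√2), Od u ∧ x = lam ^ k * u := by
  intro N
  induction N with
  | zero => intro x hx h0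
            exact absurd ((Zsqrtd.norm_eq_zero two_nonsquare x).1 (Int.natAbs_eq_zero.mp (Nat.le_zero.mp h0))) hx
  | succ N ih =>
    intro x hx hN
    by_cases h : Od x
    · exact ⟨0, x, h, by simp⟩
    · rw [Od, not_not] at h
      obtain ⟨y, hy⟩ := h
      have hy0 : y ≠ 0 := by rintro rfl; simp at hy; exact hx hy
      have hnx : x.norm.natAbs = 2 * y.norm.natAbs := by
        rw [hy, Zsqrtd.norm_mul, Int.natAbs_mul, lam_norm]
        rfl
      have hyN : y.norm.natAbs ≤ N := by
        have : y.norm.natAbs ≠ 0 := fun hh => hy0 ((Zsqrtd.norm_eq_zero two_nonsquare y).1 (Int.natAbs_eq_zero.mp hh))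
        omega
      obtain ⟨k, u, hu, hrec⟩ := ih y hy0 hyN
      exact ⟨k + 1, u, hu, by rw [hy, hrec]; ring⟩

lemma extract (x : ℤ√2) (hx : x ≠ 0) : ∃ (k : ℕ) (u : ℤ√2), Od u ∧ x = lam ^ k * u :=
  extract_aux x.norm.natAbs x hx le_rfl

lemma lam_pow_unique {k j : ℕ} {u w : ℤ√2} (hu : Od u) (hw : Od w)
    (h : lam ^ k * u = lam ^ j * w) : k = j ∧ u = w := by
  wlog hkj : k ≤ j generalizing k j u w
  · obtain ⟨h1, h2⟩ := this hw hu h.symm (le_of_not_ge hkj)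
    exact ⟨h1.symm, h2.symm⟩
  rcases Nat.lt_or_ge k j with hlt | hge
  · exfalso
    apply hu
    have heq : lam ^ k * u = lam ^ k * (lam ^ (j - k) * w) := by
      rw [h, ← mul_assoc, ← pow_add]
      congr 2
      omega
    have hu2 : u = lam ^ (j - k) * w := mul_left_cancel₀ (pow_ne_zero k lam_ne_zero) heq
    rw [hu2]
    exact Dvd.dvd.mul_right (dvd_pow_self lam (by omega)) w
  · have hkj' : k = j := le_antisymm hkj hge
    subst hkj'
    exact ⟨rfl, mul_left_cancel₀ (pow_ne_zero k lam_ne_zero) h⟩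

def eps : ℤ√2 := ⟨1,1⟩
def del : ℤ√2 := ⟨-1,1⟩
def tht : ℤ√2 := ⟨3,2⟩


lemma eps_mul_del : eps * del = 1 := by ext <;> simp [eps, del, Zsqrtd.re_mul, Zsqrtd.im_mul]

lemma isUnit_eps : IsUnit eps := IsUnit.of_mul_eq_one _ eps_mul_del
lemma isUnit_del : IsUnit del := IsUnit.of_mul_eq_one _ (by rw [mul_comm]; exact eps_mul_del)

lemma eps_ne_zero : eps ≠ 0 := by
  intro h
  have := congrArg Zsqrtd.re h
  simp [eps] at this

lemma del_pow_mul_eps_pow (n : ℕ) : del ^ n * eps ^ n = 1 := by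
  rw [← mul_pow, mul_comm del eps, eps_mul_del, one_pow]

lemma C1 : ∀ N : ℕ, ∀ u v : ℤ, 0 ≤ u → v = (N : ℤ) →
    (u * u - 2 * (v * v) = 1 ∨ u * u - 2 * (v * v) = -1) →
    ∃ n : ℕ, (⟨u, v⟩ : ℤ√2) = eps ^ n := by
  intro N
  induction N using Nat.strong_induction_on with
  | _ N ih =>
    intro u v hu hv hnorm
    rcases Nat.eq_zero_or_pos N with rfl | hN
    · have hv0 : v = 0 := by exact_mod_cast hv
      subst hv0
      have hu1 : u = 1 := by
        rcases hnorm with h | h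
        · have h' : u * u = 1 := by linear_combination h
          rcases mul_self_eq_one_iff.mp h' with h1 | h1 <;> omega
        · nlinarith [mul_self_nonneg u]
      subst hu1
      exact ⟨0, by ext <;> simp⟩
    · have hv1 : 1 ≤ v := by omega
      have trip : 1 ≤ u ∧ v ≤ u ∧ u < 2 * v := by
        rcases hnorm with h | h <;> exact ⟨by nlinarith, by nlinarith, by nlinarith⟩
      obtain ⟨hu1, hvu, hu2v⟩ := trip
      set u' := 2 * v - u with hu'
      set v' := u - v with hv'
      have hu'0 : 0 ≤ u' := by omega
      have hv'0 : 0 ≤ v' := by omega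
      have hv'lt : v' < v := by omega
      have hnorm' : u' * u' - 2 * (v' * v') = 1 ∨ u' * u' - 2 * (v' * v') = -1 := by
        rcases hnorm with h | h
        · right; nlinarith
        · left; nlinarith
      obtain ⟨n, hn⟩ := ih v'.toNat (by omega) u' v' hu'0 (by omega) hnorm'
      refine ⟨n + 1, ?_⟩
      have : (⟨u, v⟩ : ℤ√2) = (⟨u', v'⟩ : ℤ√2) * eps := by
        ext <;> simp [eps, Zsqrtd.re_mul, Zsqrtd.im_mul] <;> omega
      rw [this, hn, pow_succ]

lemma C2 {x : ℤ√2} (hx : IsUnit x) :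
    ∃ n : ℕ, x = eps ^ n ∨ x = -eps ^ n ∨ x = del ^ n ∨ x = -del ^ n := by
  have hn : x.norm = 1 ∨ x.norm = -1 := by
    have := Zsqrtd.norm_eq_one_iff.mpr hx
    omega
  have hnorm : x.re * x.re - 2 * (x.im * x.im) = 1 ∨ x.re * x.re - 2 * (x.im * x.im) = -1 := by
    rw [Zsqrtd.norm_def] at hn
    rcases hn with h | h
    · left; linarith
    · right; linarith
  have hxmk : x = (⟨x.re, x.im⟩ : ℤ√2) := by ext <;> rfl
  -- helper for the conjugate trick
  have conj_case : ∀ (y : ℤ√2) (n : ℕ), (⟨y.re, -y.im⟩ : ℤ√2) = eps ^ n →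
      (y.norm = 1 ∨ y.norm = -1) → y = del ^ n ∨ y = -del ^ n := by
    intro y n h hny
    have hstar : star y = eps ^ n := by rw [← h]; ext <;> simp [Zsqrtd.re_star, Zsqrtd.im_star]
    have hmul : y * eps ^ n = (y.norm : ℤ√2) := by
      rw [← hstar, ← Zsqrtd.norm_eq_mul_conj]
    rcases hny with h1 | h1
    · left
      have : y * eps ^ n = del ^ n * eps ^ n := by
        rw [hmul, h1, del_pow_mul_eps_pow]; norm_num
      exact mul_right_cancel₀ (pow_ne_zero _ eps_ne_zero) this
    · right
      have : y * eps ^ n = (-del ^ n) * eps ^ n := by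
        rw [hmul, h1, neg_mul, del_pow_mul_eps_pow]; norm_num
      exact mul_right_cancel₀ (pow_ne_zero _ eps_ne_zero) this
  rcases le_or_gt 0 x.re with hre | hre <;> rcases le_or_gt 0 x.im with him | him
  · obtain ⟨n, hn⟩ := C1 x.im.toNat x.re x.im hre (by omega) hnorm
    exact ⟨n, Or.inl (by rw [hxmk, hn])⟩
  · -- re ≥ 0, im < 0 : conjugate
    obtain ⟨n, hn⟩ := C1 (-x.im).toNat x.re (-x.im) hre (by omega) (by rcases hnorm with h|h; exacts [Or.inl (by nlinarith), Or.inr (by nlinarith)])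
    have := conj_case x n hn (by rw [Zsqrtd.norm_def]; rcases hnorm with h|h; exacts [Or.inl (by linarith), Or.inr (by linarith)])
    rcases this with h | h
    · exact ⟨n, Or.inr (Or.inr (Or.inl h))⟩
    · exact ⟨n, Or.inr (Or.inr (Or.inr h))⟩
  · -- re < 0, im ≥ 0 : -x has re ≥ 0, im ≤ 0: conjugate of -x
    obtain ⟨n, hn⟩ := C1 x.im.toNat (-x.re) x.im (by omega) (by omega) (by rcases hnorm with h|h; exacts [Or.inl (by nlinarith), Or.inr (by nlinarith)])
    have hy : (-x).re = -x.re ∧ (-x).im = -x.im := ⟨rfl, rfl⟩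
    have := conj_case (-x) n (by rw [← hn]; congr 1 <;> simp) (by
      rw [Zsqrtd.norm_def]; simp only [Zsqrtd.re_neg, Zsqrtd.im_neg]
      rcases hnorm with h|h; exacts [Or.inl (by nlinarith), Or.inr (by nlinarith)])
    rcases this with h | h
    · exact ⟨n, Or.inr (Or.inr (Or.inr (by rw [← h]; ring)))⟩
    · exact ⟨n, Or.inr (Or.inr (Or.inl (by rw [show del ^ n = -(-del^n) by ring, ← h]; ring)))⟩
  · -- re < 0, im < 0
    obtain ⟨n, hn⟩ := C1 (-x.im).toNat (-x.re) (-x.im) (by omega) (by omega) (by rcases hnorm with h|h; exacts [Or.inl (by nlinarith), Or.inr (by nlinarith)])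
    refine ⟨n, Or.inr (Or.inl ?_)⟩
    have : -x = eps ^ n := by rw [← hn]; ext <;> simp
    rw [← this]; ring

lemma dvd4_iff (x : ℤ√2) : (4:ℤ√2) ∣ x ↔ (4:ℤ) ∣ x.re ∧ (4:ℤ) ∣ x.im := by
  have h4 : (4:ℤ√2) = ((4:ℤ) : ℤ√2) := by norm_cast
  rw [h4, Zsqrtd.intCast_dvd]


lemma F1 {x : ℤ√2} (h : Od x) :
    (4:ℤ√2) ∣ x * x - 1 ∨ (4:ℤ√2) ∣ x * x - tht := by
  rw [od_iff] at h
  obtain ⟨m, hm⟩ : ∃ m, x.re = 2 * m + 1 := ⟨(x.re - 1) / 2, by omega⟩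
  have hre : (x * x).re = x.re * x.re + 2 * (x.im * x.im) := by
    simp [Zsqrtd.re_mul]; ring
  have him : (x * x).im = 2 * (x.re * x.im) := by
    simp [Zsqrtd.im_mul]; ring
  rcases Int.even_or_odd x.im with ⟨l, hl⟩ | ⟨l, hl⟩
  · left
    rw [dvd4_iff]
    constructor
    · refine ⟨m * m + m + 2 * (l * l), ?_⟩
      simp only [Zsqrtd.re_sub, Zsqrtd.re_one, hre, hm, hl]; ring
    · refine ⟨(2 * m + 1) * l, ?_⟩
      simp only [Zsqrtd.im_sub, Zsqrtd.im_one, him, hm, hl]; ring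
  · right
    rw [dvd4_iff]
    constructor
    · refine ⟨m * m + m + 2 * (l * l) + 2 * l, ?_⟩
      have : tht.re = 3 := rfl
      simp only [Zsqrtd.re_sub, this, hre, hm, hl]; ring
    · refine ⟨2 * m * l + m + l, ?_⟩
      have : tht.im = 2 := rfl
      simp only [Zsqrtd.im_sub, this, him, hm, hl]; ring

lemma tht_sq : tht * tht = 1 + 4 * (⟨4,3⟩ : ℤ√2) := by
  ext <;> simp [tht, Zsqrtd.re_mul, Zsqrtd.im_mul]

lemma F2 {x : ℤ√2} (h : Od x) : (4:ℤ√2) ∣ x ^ 4 - 1 := by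
  rcases F1 h with ⟨r, hr⟩ | ⟨r, hr⟩
  · exact ⟨r * (x * x + 1), by linear_combination (x * x + 1) * hr⟩
  · exact ⟨r * (x * x + tht) + ⟨4,3⟩, by linear_combination (x * x + tht) * hr + tht_sq⟩

lemma eps4 : eps ^ 4 = 1 + 4 * (⟨4,3⟩ : ℤ√2) := by
  have h2 : eps ^ 2 = tht := by ext <;> simp [eps, tht, pow_two, Zsqrtd.re_mul, Zsqrtd.im_mul]
  calc eps ^ 4 = eps ^ 2 * eps ^ 2 := by ring
  _ = 1 + 4 * (⟨4,3⟩ : ℤ√2) := by rw [h2, tht_sq]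

lemma del4 : del ^ 4 = 1 + 4 * (⟨4,-3⟩ : ℤ√2) := by
  have h2 : del ^ 2 = ⟨3,-2⟩ := by ext <;> simp [del, pow_two, Zsqrtd.re_mul, Zsqrtd.im_mul]
  have : (⟨3,-2⟩ : ℤ√2) * ⟨3,-2⟩ = 1 + 4 * (⟨4,-3⟩ : ℤ√2) := by
    ext <;> simp [Zsqrtd.re_mul, Zsqrtd.im_mul]
  calc del ^ 4 = del ^ 2 * del ^ 2 := by ring
  _ = 1 + 4 * (⟨4,-3⟩ : ℤ√2) := by rw [h2, this]

lemma pow_mod4 {b c : ℤ√2} (hb : b ^ 4 = 1 + 4 * c) :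
    ∀ n : ℕ, (4:ℤ√2) ∣ b ^ n - b ^ (n % 4) := by
  intro n
  induction n using Nat.strong_induction_on with
  | _ n ih =>
    rcases Nat.lt_or_ge n 4 with h | h
    · rw [Nat.mod_eq_of_lt h, sub_self]
      exact dvd_zero _
    · obtain ⟨m, rfl⟩ : ∃ m, n = m + 4 := ⟨n - 4, by omega⟩
      have h1 : b ^ (m + 4) - b ^ ((m + 4) % 4) =
          (b ^ m - b ^ (m % 4)) + 4 * (b ^ m * c) := by
        have : (m + 4) % 4 = m % 4 := by omega
        rw [this, pow_add, hb]; ring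
      rw [h1]
      exact dvd_add (ih m (by omega)) ⟨b ^ m * c, rfl⟩

lemma epsr : eps ^ 2 = tht ∧ eps ^ 3 = ⟨7,5⟩ := by
  constructor
  · ext <;> simp [eps, tht, pow_two, Zsqrtd.re_mul, Zsqrtd.im_mul]
  · ext <;> simp [eps, pow_succ, pow_zero, Zsqrtd.re_mul, Zsqrtd.im_mul] <;> ring

lemma delr : del ^ 2 = ⟨3,-2⟩ ∧ del ^ 3 = ⟨-7,5⟩ := by
  constructor
  · ext <;> simp [del, pow_two, Zsqrtd.re_mul, Zsqrtd.im_mul]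
  · ext <;> simp [del, pow_succ, pow_zero, Zsqrtd.re_mul, Zsqrtd.im_mul] <;> ring

lemma res_cases (n : ℕ) : n % 4 = 0 ∨ n % 4 = 1 ∨ n % 4 = 2 ∨ n % 4 = 3 := by omega

lemma eps_even {n : ℕ} (h : (4:ℤ√2) ∣ eps ^ n - 1 ∨ (4:ℤ√2) ∣ eps ^ n - tht) :
    n % 2 = 0 := by
  have hm := pow_mod4 eps4 n
  have key : (4:ℤ√2) ∣ eps ^ (n % 4) - 1 ∨ (4:ℤ√2) ∣ eps ^ (n % 4) - tht := by
    rcases h with h | h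
    · exact Or.inl (by have := dvd_sub h hm; simpa using this)
    · exact Or.inr (by have := dvd_sub h hm; simpa using this)
  rcases res_cases n with hr | hr | hr | hr <;> rw [hr] at key
  · omega
  · exfalso
    rcases key with h | h <;> rw [dvd4_iff] at h <;>
      simp only [pow_one, Zsqrtd.re_sub, Zsqrtd.im_sub, Zsqrtd.re_one, Zsqrtd.im_one] at h
    · have h1 : eps.re - 1 = 0 := by norm_num [eps]
      have h2 : eps.im = 1 := rfl
      omega
    · have h1 : eps.re - tht.re = -2 := by norm_num [eps, tht]
      have h2 : eps.im - tht.im = -1 := by norm_num [eps, tht]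
      omega
  · omega
  · exfalso
    rw [epsr.2] at key
    rcases key with h | h <;> rw [dvd4_iff] at h
    · have h1 : ((⟨7,5⟩ : ℤ√2) - 1).re = 6 := rfl
      have h2 : ((⟨7,5⟩ : ℤ√2) - 1).im = 5 := rfl
      omega
    · have h1 : ((⟨7,5⟩ : ℤ√2) - tht).re = 4 := rfl
      have h2 : ((⟨7,5⟩ : ℤ√2) - tht).im = 3 := rfl
      omega

lemma del_even {n : ℕ} (h : (4:ℤ√2) ∣ del ^ n - 1 ∨ (4:ℤ√2) ∣ del ^ n - tht) :
    n % 2 = 0 := by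
  have hm := pow_mod4 del4 n
  have key : (4:ℤ√2) ∣ del ^ (n % 4) - 1 ∨ (4:ℤ√2) ∣ del ^ (n % 4) - tht := by
    rcases h with h | h
    · exact Or.inl (by have := dvd_sub h hm; simpa using this)
    · exact Or.inr (by have := dvd_sub h hm; simpa using this)
  rcases res_cases n with hr | hr | hr | hr <;> rw [hr] at key
  · omega
  · exfalso
    rcases key with h | h <;> rw [dvd4_iff] at h
    · have h1 : (del ^ 1 - 1).re = -2 := rfl
      have h2 : (del ^ 1 - 1).im = 1 := rfl
      omega
    · have h1 : (del ^ 1 - tht).re = -4 := rfl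
      have h2 : (del ^ 1 - tht).im = -1 := rfl
      omega
  · omega
  · exfalso
    rw [delr.2] at key
    rcases key with h | h <;> rw [dvd4_iff] at h
    · have h1 : ((⟨-7,5⟩ : ℤ√2) - 1).re = -8 := rfl
      have h2 : ((⟨-7,5⟩ : ℤ√2) - 1).im = 5 := rfl
      omega
    · have h1 : ((⟨-7,5⟩ : ℤ√2) - tht).re = -10 := rfl
      have h2 : ((⟨-7,5⟩ : ℤ√2) - tht).im = 3 := rfl
      omega

lemma neg_not {b c : ℤ√2} (hb : b ^ 4 = 1 + 4 * c)
    (htab : ∀ r : ℕ, r < 4 → ¬ ((4:ℤ√2) ∣ b ^ r + 1) ∧ ¬ ((4:ℤ√2) ∣ b ^ r + tht))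
    {n : ℕ} (h : (4:ℤ√2) ∣ -b ^ n - 1 ∨ (4:ℤ√2) ∣ -b ^ n - tht) : False := by
  have hm := pow_mod4 hb n
  have hlt : n % 4 < 4 := by omega
  rcases h with h | h
  · exact (htab _ hlt).1 (by
      have := dvd_add h hm
      have h2 : -b ^ n - 1 + (b ^ n - b ^ (n % 4)) = -(b ^ (n % 4) + 1) := by ring
      rw [h2] at this
      exact (dvd_neg).mp this)
  · exact (htab _ hlt).2 (by
      have := dvd_add h hm
      have h2 : -b ^ n - tht + (b ^ n - b ^ (n % 4)) = -(b ^ (n % 4) + tht) := by ring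
      rw [h2] at this
      exact (dvd_neg).mp this)

lemma eps_tab : ∀ r : ℕ, r < 4 → ¬ ((4:ℤ√2) ∣ eps ^ r + 1) ∧ ¬ ((4:ℤ√2) ∣ eps ^ r + tht) := by
  intro r hr
  interval_cases r <;>
    refine ⟨fun h => ?_, fun h => ?_⟩ <;> rw [dvd4_iff] at h <;>
    obtain ⟨h1, h2⟩ := h <;> revert h1 h2 <;>
    norm_num [eps, tht, pow_succ, Zsqrtd.re_mul, Zsqrtd.im_mul, Zsqrtd.re_add, Zsqrtd.im_add,
      Zsqrtd.re_one, Zsqrtd.im_one]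

lemma del_tab : ∀ r : ℕ, r < 4 → ¬ ((4:ℤ√2) ∣ del ^ r + 1) ∧ ¬ ((4:ℤ√2) ∣ del ^ r + tht) := by
  intro r hr
  interval_cases r <;>
    refine ⟨fun h => ?_, fun h => ?_⟩ <;> rw [dvd4_iff] at h <;>
    obtain ⟨h1, h2⟩ := h <;> revert h1 h2 <;>
    norm_num [del, tht, pow_succ, Zsqrtd.re_mul, Zsqrtd.im_mul, Zsqrtd.re_add, Zsqrtd.im_add,
      Zsqrtd.re_one, Zsqrtd.im_one]

/-- Key unit lemma: a unit congruent to an odd square mod 4 is a square of a unit. -/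
lemma unit_square {v : ℤ√2} (hv : IsUnit v)
    (h : (4:ℤ√2) ∣ v - 1 ∨ (4:ℤ√2) ∣ v - tht) :
    ∃ η : ℤ√2, IsUnit η ∧ η ^ 2 = v := by
  obtain ⟨n, hn | hn | hn | hn⟩ := C2 hv
  · subst hn
    have he := eps_even h
    refine ⟨eps ^ (n / 2), (isUnit_eps).pow _, ?_⟩
    rw [← pow_mul]
    congr 1
    omega
  · exfalso; rw [hn] at h; exact neg_not eps4 eps_tab h
  · subst hn
    have he := del_even h
    refine ⟨del ^ (n / 2), (isUnit_del).pow _, ?_⟩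
    rw [← pow_mul]
    congr 1
    omega
  · exfalso; rw [hn] at h; exact neg_not del4 del_tab h

lemma four_eq : (4:ℤ√2) = lam ^ 4 := by
  have : lam ^ 4 = lam ^ 2 * lam ^ 2 := by ring
  rw [this, lam_sq]; norm_num

/-- The core descent step, assuming the two factors have been ordered so that k < j. -/
lemma descent_core (n : ℕ)
    (ih : ∀ m, m < n → 1 ≤ m → ∀ A B C τ ε : ℤ√2, IsUnit τ → IsUnit ε →
      Od A → Od B → Od C → (∀ p : ℤ√2, Prime p → p ∣ A → p ∣ B → False) →
      A ^ 2 - τ ^ 2 * B ^ 4 = ε * lam ^ (4 * m) * C ^ 4 → False)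
    (A B C τ ε : ℤ√2) (hτ : IsUnit τ) (hε : IsUnit ε)
    (hA : Od A) (hB : Od B) (hC : Od C)
    (hco : ∀ p : ℤ√2, Prime p → p ∣ A → p ∣ B → False)
    (k j : ℕ) (u w : ℤ√2) (hu : Od u) (hw : Od w)
    (hkP : A - τ * B ^ 2 = lam ^ k * u) (hkQ : A + τ * B ^ 2 = lam ^ j * w)
    (hsum : k + j = 4 * n) (huw : u * w = ε * C ^ 4) (hkj : k < j) : False := by
  -- basic identities
  have h2A : lam ^ 2 * A = lam ^ k * u + lam ^ j * w := by
    linear_combination hkP + hkQ + A * lam_sq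
  have hdiff : lam ^ j * w - lam ^ k * u = lam ^ 2 * (τ * B ^ 2) := by
    linear_combination hkP - hkQ - τ * B ^ 2 * lam_sq
  -- k = 2
  have hk2 : k = 2 ∧ A = u + lam ^ (j - k) * w := by
    have hsplit : lam ^ 2 * A = lam ^ k * (u + lam ^ (j - k) * w) := by
      rw [h2A, mul_add, ← mul_assoc, ← pow_add]
      congr 3
      omega
    have hods : Od (u + lam ^ (j - k) * w) := by
      rw [od_iff]
      have h1 : ¬ (2 ∣ u.re) := (od_iff u).mp hu
      have h2 : (2:ℤ) ∣ (lam ^ (j - k) * w).re := by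
        rw [← lam_dvd_iff]
        exact Dvd.dvd.mul_right (dvd_pow_self lam (by omega)) w
      simp only [Zsqrtd.re_add]
      omega
    have := lam_pow_unique hA hods hsplit
    exact ⟨this.1.symm, this.2⟩
  obtain ⟨hk2', hAeq⟩ := hk2
  subst hk2'
  have hj : j = 4 * (n - 1) + 2 := by omega
  have hn2 : 2 ≤ n := by omega
  subst hj
  -- coprimality of u and w
  have hcuw : ∀ p : ℤ√2, Prime p → p ∣ u → p ∣ w → False := by
    intro p hp hpu hpw
    have hplam : ¬ p ∣ lam := by
      intro hd
      obtain ⟨c, hc⟩ := hd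
      rcases (prime_lam.irreducible.isUnit_or_isUnit hc) with h | h
      · exact hp.not_unit h
      · obtain ⟨ci, hci⟩ := h.exists_right_inv
        have hlp : lam ∣ u := by
          have hpl : p = lam * ci := by
            calc p = p * (c * ci) := by rw [hci, mul_one]
            _ = (p * c) * ci := by ring
            _ = lam * ci := by rw [← hc]
          exact hu (by rw [hpl] at hpu; exact dvd_of_mul_right_dvd hpu) |>.elim
        exact hu hlp
    have hpA : p ∣ A := by
      have h1 : p ∣ lam ^ 2 * A := by
        rw [h2A]
        exact dvd_add (Dvd.dvd.mul_left hpu _) (Dvd.dvd.mul_left hpw _)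
      rcases hp.2.2 _ _ h1 with h | h
      · exfalso
        rcases hp.2.2 _ _ (by rwa [pow_two] at h) with h' | h' <;> exact hplam h'
      · exact h
    have hpB : p ∣ B := by
      have h1 : p ∣ lam ^ 2 * (τ * B ^ 2) := by
        rw [← hdiff]
        exact dvd_sub (Dvd.dvd.mul_left hpw _) (Dvd.dvd.mul_left hpu _)
      have h2 : p ∣ τ * B ^ 2 := by
        rcases hp.2.2 _ _ h1 with h | h
        · exfalso
          rcases hp.2.2 _ _ (by rwa [pow_two] at h) with h' | h' <;> exact hplam h'
        · exact h
      rcases hp.2.2 _ _ h2 with h | h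
      · exact absurd (isUnit_of_dvd_unit h hτ) hp.not_unit
      · exact hp.dvd_of_dvd_pow h
    exact hco p hp hpA hpB
  -- factor u and w into unit times fourth powers
  obtain ⟨ε', hε'⟩ := hε.exists_right_inv
  have hu0 : (ε' * u) * w = C ^ 4 := by linear_combination ε' * huw + C ^ 4 * hε'
  have hεu : ε * (ε' * u) = u := by linear_combination u * hε'
  have huain : ∀ p : ℤ√2, p ∣ ε' * u → p ∣ u := by
    intro p hd
    exact hεu ▸ Dvd.dvd.mul_left hd ε
  have hwu0 : w * (ε' * u) = C ^ 4 := by rw [mul_comm]; exact hu0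
  have hgcd1 : IsUnit (gcd (ε' * u) w) := by
    by_contra hng
    have h00 : gcd (ε' * u) w ≠ 0 := by
      intro hg
      exact od_ne_zero hw ((gcd_eq_zero_iff _ _).mp hg).2
    obtain ⟨p, hpirr, hpd⟩ := WfDvdMonoid.exists_irreducible_factor hng h00
    have hp : Prime p := (UniqueFactorizationMonoid.irreducible_iff_prime).mp hpirr
    exact hcuw p hp (huain p (hpd.trans (gcd_dvd_left _ _))) (hpd.trans (gcd_dvd_right _ _))
  have hgcd2 : IsUnit (gcd w (ε' * u)) := by
    by_contra hng
    have h00 : gcd w (ε' * u) ≠ 0 := by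
      intro hg
      exact od_ne_zero hw ((gcd_eq_zero_iff _ _).mp hg).1
    obtain ⟨p, hpirr, hpd⟩ := WfDvdMonoid.exists_irreducible_factor hng h00
    have hp : Prime p := (UniqueFactorizationMonoid.irreducible_iff_prime).mp hpirr
    exact hcuw p hp (huain p (hpd.trans (gcd_dvd_right _ _))) (hpd.trans (gcd_dvd_left _ _))
  obtain ⟨ρ, hρ⟩ := exists_associated_pow_of_mul_eq_pow hgcd1 hu0
  obtain ⟨σ, hσ⟩ := exists_associated_pow_of_mul_eq_pow hgcd2 hwu0
  obtain ⟨μ₁, hμ₁⟩ := hρ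
  obtain ⟨μ₂, hμ₂⟩ := hσ
  have hueq : u = (ε * μ₁) * ρ ^ 4 := by
    calc u = ε * (ε' * u) := hεu.symm
    _ = ε * (ρ ^ 4 * μ₁) := by rw [hμ₁]
    _ = (ε * μ₁) * ρ ^ 4 := by ring
  have hweq : w = μ₂ * σ ^ 4 := by rw [← hμ₂]; ring
  set ε₁ : ℤ√2 := ε * μ₁ with hε₁def
  have hε₁ : IsUnit ε₁ := hε.mul μ₁.isUnit
  have hμ₂u : IsUnit (μ₂ : ℤ√2) := μ₂.isUnit
  have hρod : Od ρ := by
    intro hd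
    apply hu
    rw [hueq]
    exact Dvd.dvd.mul_left (hd.trans (dvd_pow_self ρ (by norm_num))) _
  have hσod : Od σ := by
    intro hd
    apply hw
    rw [hweq]
    exact Dvd.dvd.mul_left (hd.trans (dvd_pow_self σ (by norm_num))) _
  -- the key equation
  have hmain : τ * B ^ 2 = lam ^ (4 * (n - 1)) * w - u := by
    have hcan : lam ^ 2 * (τ * B ^ 2) = lam ^ 2 * (lam ^ (4 * (n - 1)) * w - u) := by
      linear_combination -hdiff
    exact mul_left_cancel₀ (pow_ne_zero 2 lam_ne_zero) hcan
  -- congruences mod 4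
  have hmod1 : (4:ℤ√2) ∣ τ * B ^ 2 + u := by
    have hsplit : 4 * (n - 1) = 4 + 4 * (n - 2) := by omega
    refine ⟨lam ^ (4 * (n - 2)) * w, ?_⟩
    rw [four_eq]
    calc τ * B ^ 2 + u = lam ^ (4 * (n - 1)) * w := by linear_combination hmain
    _ = lam ^ 4 * (lam ^ (4 * (n - 2)) * w) := by rw [hsplit, pow_add]; ring
  have hmod2 : (4:ℤ√2) ∣ τ * B ^ 2 + ε₁ := by
    have h4ρ : (4:ℤ√2) ∣ ρ ^ 4 - 1 := F2 hρod
    obtain ⟨r, hr⟩ := h4ρ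
    obtain ⟨t, ht⟩ := hmod1
    exact ⟨t - ε₁ * r, by rw [hueq] at ht; linear_combination ht - ε₁ * hr⟩
  obtain ⟨τ', hττ'⟩ := hτ.exists_right_inv
  set ν : ℤ√2 := -(τ' * ε₁) with hνdef
  have hνu : IsUnit ν := ((IsUnit.of_mul_eq_one (a := τ') τ (by rwa [mul_comm] at hττ')).mul hε₁).neg
  have hνmod : (4:ℤ√2) ∣ B ^ 2 - ν := by
    obtain ⟨t, ht⟩ := hmod2
    exact ⟨τ' * t, by linear_combination τ' * ht - B ^ 2 * hττ' - hνdef⟩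
  have hν14 : (4:ℤ√2) ∣ ν - 1 ∨ (4:ℤ√2) ∣ ν - tht := by
    rcases F1 hB with h | h
    · left
      obtain ⟨t1, ht1⟩ := h
      obtain ⟨t2, ht2⟩ := hνmod
      exact ⟨t1 - t2, by linear_combination ht1 - ht2⟩
    · right
      obtain ⟨t1, ht1⟩ := h
      obtain ⟨t2, ht2⟩ := hνmod
      exact ⟨t1 - t2, by linear_combination ht1 - ht2⟩
  obtain ⟨η, hηu, hη⟩ := unit_square hνu hν14
  have hε₁eq : ε₁ = -(τ * η ^ 2) := by
    linear_combination τ * hη + τ * hνdef - ε₁ * hττ'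
  -- final equation for the smaller instance
  have hfinal : B ^ 2 - η ^ 2 * ρ ^ 4 = (τ' * μ₂) * lam ^ (4 * (n - 1)) * σ ^ 4 := by
    have hcan : τ * (B ^ 2 - η ^ 2 * ρ ^ 4) = τ * ((τ' * μ₂) * lam ^ (4 * (n - 1)) * σ ^ 4) := by
      rw [hueq, hweq] at hmain
      linear_combination hmain - ρ ^ 4 * hε₁eq - (μ₂ * lam ^ (4 * (n - 1)) * σ ^ 4) * hττ'
    exact mul_left_cancel₀ hτ.ne_zero hcan
  -- apply induction hypothesis
  have hcoBρ : ∀ p : ℤ√2, Prime p → p ∣ B → p ∣ ρ → False := by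
    intro p hp hpB hpρ
    have hpu : p ∣ u := by
      rw [hueq]
      exact Dvd.dvd.mul_left (hpρ.trans (dvd_pow_self ρ (by norm_num))) _
    have hpA : p ∣ A := by
      have h1 : p ∣ lam ^ 2 * u := Dvd.dvd.mul_left hpu _
      have hPd : p ∣ A - τ * B ^ 2 := by rw [hkP]; exact Dvd.dvd.mul_left hpu _
      have : A = (A - τ * B ^ 2) + τ * B ^ 2 := by ring
      rw [this]
      exact dvd_add hPd (Dvd.dvd.mul_left (hpB.trans (dvd_pow_self B (by norm_num))) τ)
    exact hco p hp hpA hpB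
  exact ih (n - 1) (by omega) (by omega) B ρ σ η (τ' * μ₂) hηu
    ((IsUnit.of_mul_eq_one (a := τ') τ (by rwa [mul_comm] at hττ')).mul hμ₂u)
    hB hρod hσod hcoBρ (by rw [hfinal])

lemma descent : ∀ n : ℕ, 1 ≤ n → ∀ A B C τ ε : ℤ√2, IsUnit τ → IsUnit ε →
    Od A → Od B → Od C → (∀ p : ℤ√2, Prime p → p ∣ A → p ∣ B → False) →
    A ^ 2 - τ ^ 2 * B ^ 4 = ε * lam ^ (4 * n) * C ^ 4 → False := by
  intro n
  induction n using Nat.strong_induction_on with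
  | _ n ih =>
    intro hn A B C τ ε hτ hε hA hB hC hco heq
    have ih' : ∀ m, m < n → 1 ≤ m → ∀ A B C τ ε : ℤ√2, IsUnit τ → IsUnit ε →
        Od A → Od B → Od C → (∀ p : ℤ√2, Prime p → p ∣ A → p ∣ B → False) →
        A ^ 2 - τ ^ 2 * B ^ 4 = ε * lam ^ (4 * m) * C ^ 4 → False :=
      fun m hm => ih m hm
    have hPQ : (A - τ * B ^ 2) * (A + τ * B ^ 2) = ε * lam ^ (4 * n) * C ^ 4 := by
      linear_combination heq
    have hrhs : ε * lam ^ (4 * n) * C ^ 4 ≠ 0 :=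
      mul_ne_zero (mul_ne_zero hε.ne_zero (pow_ne_zero _ lam_ne_zero))
        (pow_ne_zero _ (od_ne_zero hC))
    have hP0 : A - τ * B ^ 2 ≠ 0 := fun h => hrhs (by rw [← hPQ, h, zero_mul])
    have hQ0 : A + τ * B ^ 2 ≠ 0 := fun h => hrhs (by rw [← hPQ, h, mul_zero])
    obtain ⟨k, u, hu, hkP⟩ := extract _ hP0
    obtain ⟨j, w, hw, hkQ⟩ := extract _ hQ0
    have hprod : lam ^ (k + j) * (u * w) = lam ^ (4 * n) * (ε * C ^ 4) := by
      rw [pow_add]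
      rw [hkP, hkQ] at hPQ
      linear_combination hPQ
    obtain ⟨hsum, huw⟩ :=
      lam_pow_unique (od_mul hu hw) (od_mul (od_unit hε) (od_pow hC 4)) hprod
    rcases lt_trichotomy k j with hkj | hkj | hkj
    · exact descent_core n ih' A B C τ ε hτ hε hA hB hC hco k j u w hu hw hkP hkQ hsum huw hkj
    · subst hkj
      have hl : lam ∣ u + w := by
        rw [lam_dvd_iff]
        have h1 := (od_iff u).mp hu
        have h2 := (od_iff w).mp hw
        simp only [Zsqrtd.re_add]
        omega
      obtain ⟨t, ht⟩ := hl
      have h2A : lam ^ 2 * A = lam ^ (k + 1) * t := by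
        linear_combination hkP + hkQ + A * lam_sq + lam ^ k * ht
      have hAeq : A = lam ^ (k - 1) * t := by
        apply mul_left_cancel₀ (pow_ne_zero 2 lam_ne_zero)
        rw [h2A, show k + 1 = 2 + (k - 1) by omega, pow_add]
        ring
      exact hA (by rw [hAeq]; exact Dvd.dvd.mul_right (dvd_pow_self lam (by omega)) t)
    · exact descent_core n ih' A B C (-τ) ε hτ.neg hε hA hB hC hco j k w u hw hu
        (by rw [← hkQ]; ring) (by rw [← hkP]; ring) (by omega) (by rw [← huw]; ring) hkj

/-- descent applied when exactly the second variable is even -/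
lemma main_case (a b c : ℤ√2) (hb0 : b ≠ 0)
    (hco : ∀ p : ℤ√2, Prime p → p ∣ a → p ∣ b → False)
    (heq : a ^ 4 + b ^ 4 = c ^ 4) (hoa : Od a) (hob : ¬ Od b) : False := by
  obtain ⟨k, b₁, hb₁, hbe⟩ := extract b hb0
  have hk1 : 1 ≤ k := by
    rcases Nat.eq_zero_or_pos k with rfl | h
    · exfalso; apply hob; rw [hbe, pow_zero, one_mul]; exact hb₁
    · omega
  have hlb : lam ∣ b := by
    rw [hbe]; exact Dvd.dvd.mul_right (dvd_pow_self lam (by omega)) b₁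
  have hoc : Od c := by
    intro hlc
    have h2 : lam ∣ c ^ 4 := hlc.trans (dvd_pow_self c (by norm_num))
    have h3 : lam ∣ b ^ 4 := hlb.trans (dvd_pow_self b (by norm_num))
    have h4 : lam ∣ a ^ 4 := by
      have ha4 : a ^ 4 = c ^ 4 - b ^ 4 := by linear_combination heq
      rw [ha4]; exact dvd_sub h2 h3
    exact hoa (prime_lam.dvd_of_dvd_pow h4)
  have hcoca : ∀ p : ℤ√2, Prime p → p ∣ c ^ 2 → p ∣ a → False := by
    intro p hp hpc2 hpa
    have hpc : p ∣ c := hp.dvd_of_dvd_pow hpc2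
    have hpb4 : p ∣ b ^ 4 := by
      have hb4 : b ^ 4 = c ^ 4 - a ^ 4 := by linear_combination heq
      rw [hb4]
      exact dvd_sub (hpc.trans (dvd_pow_self c (by norm_num)))
        (hpa.trans (dvd_pow_self a (by norm_num)))
    exact hco p hp hpa (hp.dvd_of_dvd_pow hpb4)
  have hb4 : b ^ 4 = lam ^ (4 * k) * b₁ ^ 4 := by
    rw [hbe, mul_pow, ← pow_mul, Nat.mul_comm]
  exact descent k hk1 (c ^ 2) a b₁ 1 1 isUnit_one isUnit_one
    (od_pow hoc 2) hoa hb₁ hcoca (by linear_combination -heq + hb4)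

end FLT4

open FLT4 in
/-- Fermat's Last Theorem for exponent 4 over ℤ[√2]. -/
theorem stmt_10 (x y z : ℤ√2) (h : x ^ 4 + y ^ 4 = z ^ 4) : x * y * z = 0 := by
  by_contra h0
  have hx : x ≠ 0 := fun hh => h0 (by rw [hh]; ring)
  have hy : y ≠ 0 := fun hh => h0 (by rw [hh]; ring)
  have hz : z ≠ 0 := fun hh => h0 (by rw [hh]; ring)
  set d : ℤ√2 := gcd x y with hd
  clear_value d
  have hd0 : d ≠ 0 := fun hh => hx ((gcd_eq_zero_iff x y).mp (hd ▸ hh)).1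
  obtain ⟨a, ha⟩ : d ∣ x := hd ▸ gcd_dvd_left x y
  obtain ⟨b, hb⟩ : d ∣ y := hd ▸ gcd_dvd_right x y
  have hdz4 : d ^ 4 ∣ z ^ 4 := ⟨a ^ 4 + b ^ 4, by rw [← h, ha, hb]; ring⟩
  have hdz : d ∣ z := (IsIntegrallyClosed.pow_dvd_pow_iff (by norm_num)).mp hdz4
  obtain ⟨c, hc⟩ := hdz
  have ha0 : a ≠ 0 := fun hh => hx (by rw [ha, hh, mul_zero])
  have hb0 : b ≠ 0 := fun hh => hy (by rw [hb, hh, mul_zero])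
  have hc0 : c ≠ 0 := fun hh => hz (by rw [hc, hh, mul_zero])
  have heq : a ^ 4 + b ^ 4 = c ^ 4 := by
    have h4 : d ^ 4 * (a ^ 4 + b ^ 4) = d ^ 4 * c ^ 4 := by
      rw [ha, hb, hc] at h
      linear_combination h
    exact mul_left_cancel₀ (pow_ne_zero 4 hd0) h4
  have hco : ∀ p : ℤ√2, Prime p → p ∣ a → p ∣ b → False := by
    intro p hp hpa hpb
    have h1x : d * p ∣ x := by rw [ha]; exact mul_dvd_mul_left d hpa
    have h1y : d * p ∣ y := by rw [hb]; exact mul_dvd_mul_left d hpb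
    have h1 : d * p ∣ d := by
      conv_rhs => rw [hd]
      exact dvd_gcd h1x h1y
    have h2 : p ∣ 1 := (mul_dvd_mul_iff_left hd0).mp (by rwa [mul_one])
    exact hp.not_unit (isUnit_of_dvd_one h2)
  by_cases hoa : Od a <;> by_cases hob : Od b
  · -- both odd : impossible mod 4
    have hc2 : (4:ℤ√2) ∣ c ^ 4 - 2 := by
      obtain ⟨t1, ht1⟩ := F2 hoa
      obtain ⟨t2, ht2⟩ := F2 hob
      exact ⟨t1 + t2, by linear_combination ht1 + ht2 - heq⟩
    by_cases hoc : Od c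
    · obtain ⟨t1, ht1⟩ := F2 hoc
      obtain ⟨t2, ht2⟩ := hc2
      have h1 : (4:ℤ√2) ∣ 1 := ⟨t1 - t2, by linear_combination ht1 - ht2⟩
      rw [dvd4_iff] at h1
      have := h1.1
      simp only [Zsqrtd.re_one] at this
      omega
    · rw [Od, not_not] at hoc
      obtain ⟨e, he⟩ := hoc
      have h1 : (4:ℤ√2) ∣ 2 := by
        obtain ⟨t2, ht2⟩ := hc2
        refine ⟨e ^ 4 - t2, ?_⟩
        have hc4 : c ^ 4 = 4 * e ^ 4 := by rw [he, four_eq]; ring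
        linear_combination hc4 - ht2
      rw [dvd4_iff] at h1
      have := h1.1
      have h2re : ((2:ℤ√2)).re = 2 := rfl
      omega
  · exact main_case a b c hb0 hco heq hoa hob
  · exact main_case b a c ha0 (fun p hp hpb hpa => hco p hp hpa hpb)
      (by linear_combination heq) hob hoa
  · rw [Od, not_not] at hoa hob
    exact hco lam prime_lam hoa hob
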